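/- Let X : Fin n → Matrix (Fin D) (Fin D) ℂ be positive semidefinite matrices. Then the height 𝔥(X), defined as the infimum of the real traces of Hermitian matrices H with H − X i positive semidefinite for all i, satisfies the semidefinite-programming duality: 𝔥(X) = sSup { ∑ i, Re (Matrix.trace (X i * Y i)) | Y is an n-outcome measurement on ℂ^D, i.e., Y : Fin n → Matrix (Fin D) (Fin D) ℂ with each Y i positive semidefinite and ∑ i, Y i = 1 }. -/

import Mathlib

open Matrix
open scoped Kronecker ComplexOrder

noncomputable section

/-- A measurement (POVM): a finite family of positive semidefinite matrices summing to `1`. -/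
def IsMeasurement {ι κ : Type*} [Fintype ι] [DecidableEq ι] [Fintype κ]
    (A : κ → Matrix ι ι ℂ) : Prop :=
  (∀ x, (A x).PosSemidef) ∧ ∑ x, A x = 1

/-- `A` is a post-processing of `B`: `A ⪯ B`. -/
def PostProc {ι : Type*} {n m : ℕ}
    (A : Fin n → Matrix ι ι ℂ) (B : Fin m → Matrix ι ι ℂ) : Prop :=
  ∃ μ : Fin n → Fin m → ℝ,
    (∀ x y, 0 ≤ μ x y) ∧ (∀ y, ∑ x, μ x y = 1) ∧
    (∀ x, A x = ∑ y, (μ x y : ℂ) • B y)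

/-- The outer product `|E⟩⟨F|` of the vectorizations of two matrices. -/
def outerProd {ι : Type*} (E F : Matrix ι ι ℂ) : Matrix (ι × ι) (ι × ι) ℂ :=
  Matrix.of fun p q => E p.1 p.2 * star (F q.1 q.2)

/-- The (un-normalized) Fisher information map of a measurement. -/
noncomputable def Fisher {ι κ : Type*} [Fintype ι] [Fintype κ]
    (A : κ → Matrix ι ι ℂ) : Matrix (ι × ι) (ι × ι) ℂ :=
  ∑ x, (Matrix.trace (A x))⁻¹ • outerProd (A x) (A x)

/-- The generalized Fisher information map of a measurement, relative to a
positive definite state `ρ` (with positive semidefinite square root `ρ^{1/2}`). -/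
noncomputable def FisherRho {ι κ : Type*} [Fintype ι] [DecidableEq ι] [Fintype κ]
    {ρ : Matrix ι ι ℂ} (hρ : ρ.PosDef) (A : κ → Matrix ι ι ℂ) :
    Matrix (ι × ι) (ι × ι) ℂ :=
  ∑ x, (Matrix.trace (ρ * A x))⁻¹ •
    outerProd (((hρ.posSemidef.1.eigenvectorUnitary : Matrix ι ι ℂ) * diagonal ((↑) ∘ (√·) ∘ hρ.posSemidef.1.eigenvalues) *
      (star hρ.posSemidef.1.eigenvectorUnitary : Matrix ι ι ℂ)) * A x)
      (((hρ.posSemidef.1.eigenvectorUnitary : Matrix ι ι ℂ) * diagonal ((↑) ∘ (√·) ∘ hρ.posSemidef.1.eigenvalues) *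
      (star hρ.posSemidef.1.eigenvectorUnitary : Matrix ι ι ℂ)) * A x)

/-- The height of a finite family of self-adjoint matrices: the infimum of the traces of
Hermitian matrices dominating every member in the Loewner order. -/
noncomputable def height {ι κ : Type*} [Fintype ι] [Fintype κ]
    (X : κ → Matrix ι ι ℂ) : ℝ :=
  sInf { t : ℝ | ∃ H : Matrix ι ι ℂ, H.IsHermitian ∧
    (∀ i, (H - X i).PosSemidef) ∧ t = (Matrix.trace H).re }

namespace SDPaux
variable {ι : Type*} [Fintype ι] [DecidableEq ι]

abbrev M (ι : Type*) := Matrix ι ι ℂ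

lemma psd_smul {A : M ι} (hA : A.PosSemidef) {r : ℝ} (hr : 0 ≤ r) : (r • A).PosSemidef := by
  refine Matrix.PosSemidef.of_dotProduct_mulVec_nonneg ?_ fun x => ?_
  · show _ = _
    rw [conjTranspose_smul, hA.1.eq]
    norm_num
  · rw [smul_mulVec, dotProduct_smul]
    have h0 : (0:ℂ) ≤ (r : ℂ) := by exact_mod_cast Complex.zero_le_real.2 hr
    calc (0:ℂ) = (r:ℂ) * 0 := by ring
    _ ≤ (r:ℂ) * (star x ⬝ᵥ A *ᵥ x) := by
        exact mul_le_mul_of_nonneg_left (hA.dotProduct_mulVec_nonneg x) h0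
    _ = r • (star x ⬝ᵥ A *ᵥ x) := by rw [Complex.real_smul]

lemma pd_smul {A : M ι} (hA : A.PosDef) {r : ℝ} (hr : 0 < r) : (r • A).PosDef := by
  refine Matrix.PosDef.of_dotProduct_mulVec_pos (psd_smul hA.posSemidef hr.le).1 fun x hx => ?_
  rw [smul_mulVec, dotProduct_smul]
  have := hA.dotProduct_mulVec_pos hx
  calc (0:ℂ) = (r:ℂ) * 0 := by ring
  _ < (r:ℂ) * (star x ⬝ᵥ A *ᵥ x) := by
      apply mul_lt_mul_of_pos_left this
      exact_mod_cast (by exact_mod_cast hr : (0:ℂ) < (r:ℂ))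
  _ = r • (star x ⬝ᵥ A *ᵥ x) := by rw [Complex.real_smul]

lemma trace_psd_nonneg {A : M ι} (hA : A.PosSemidef) : 0 ≤ A.trace := by
  rw [Matrix.trace]
  apply Finset.sum_nonneg
  intro i _
  have := hA.dotProduct_mulVec_nonneg (Pi.single i 1)
  simpa [dotProduct, Matrix.mulVec, Pi.single_apply, Matrix.diag] using this

open scoped MatrixOrder in
lemma trace_mul_psd_nonneg {A B : M ι} (hA : A.PosSemidef) (hB : B.PosSemidef) :
    0 ≤ (A * B).trace := by
  set S := CFC.sqrt B with hS
  have hSh : Sᴴ = S := (CFC.sqrt_nonneg B).posSemidef.1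
  have h1 : A * B = A * S * S := by rw [← CFC.sqrt_mul_sqrt_self B hB.nonneg, mul_assoc]
  have h2 : (A * S * S).trace = (S * A * S).trace := by
    rw [trace_mul_cycle]
  have h3 : (S * A * S).PosSemidef := by
    have := hA.conjTranspose_mul_mul_same S
    rwa [hSh] at this
  rw [h1, h2]
  exact trace_psd_nonneg h3

lemma vecMulVec_posSemidef (v : ι → ℂ) : (vecMulVec v (star v)).PosSemidef := by
  refine Matrix.PosSemidef.of_dotProduct_mulVec_nonneg ?_ fun x => ?_
  · show _ = _
    ext i j
    simp [vecMulVec, conjTranspose_apply, mul_comm]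
  · have : (vecMulVec v (star v)) *ᵥ x = (star v ⬝ᵥ x) • v := by
      ext j
      simp [vecMulVec, Matrix.mulVec, dotProduct, Finset.mul_sum, mul_comm, mul_left_comm]
    rw [this, dotProduct_smul]
    have : star x ⬝ᵥ v = star (star v ⬝ᵥ x) := by
      simp [dotProduct, mul_comm]
    rw [smul_eq_mul, mul_comm, this]
    exact star_mul_self_nonneg _

set_option linter.unusedSectionVars false

/-- Hermitian part of a matrix. -/
def hermPart (Z : M ι) : M ι := (2⁻¹ : ℂ) • (Z + Zᴴ)

lemma hermPart_isHermitian (Z : M ι) : (hermPart Z).IsHermitian := by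
  show _ = _
  rw [hermPart, conjTranspose_smul, conjTranspose_add, conjTranspose_conjTranspose]
  rw [add_comm]
  norm_num

lemma hermPart_add (Z W : M ι) : hermPart (Z + W) = hermPart Z + hermPart W := by
  simp [hermPart, conjTranspose_add, smul_add]
  abel

lemma hermPart_smul (r : ℝ) (Z : M ι) : hermPart (r • Z) = r • hermPart Z := by
  rw [hermPart, hermPart, conjTranspose_smul]
  rw [show star r = r from rfl]
  rw [← smul_add, smul_comm]

lemma hermPart_of_isHermitian {Z : M ι} (h : Z.IsHermitian) : hermPart Z = Z := by
  rw [hermPart, h.eq, ← two_smul ℂ, smul_smul]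
  norm_num

lemma dotProduct_self_star (Y : M ι) (hY : Y.IsHermitian) (v : ι → ℂ) :
    star (star v ⬝ᵥ Y *ᵥ v) = star v ⬝ᵥ Y *ᵥ v := by
  calc star (star v ⬝ᵥ Y *ᵥ v) = star (Y *ᵥ v) ⬝ᵥ v := (star_dotProduct _ _).symm
  _ = (star v ᵥ* Yᴴ) ⬝ᵥ v := by rw [star_mulVec]
  _ = star v ⬝ᵥ Y *ᵥ v := by rw [hY.eq, ← dotProduct_mulVec]

lemma trace_mul_vecMulVec (Y : M ι) (v : ι → ℂ) :
    (Y * vecMulVec v (star v)).trace = star v ⬝ᵥ Y *ᵥ v := by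
  simp only [Matrix.trace, Matrix.diag, Matrix.mul_apply, vecMulVec_apply,
    dotProduct, Matrix.mulVec, Pi.star_apply, Finset.mul_sum]
  refine Finset.sum_congr rfl fun j _ => Finset.sum_congr rfl fun k _ => by ring

/-- A Hermitian matrix with nonneg `Re (v* Y v)` for rank-one projections is PSD. -/
lemma posSemidef_of_re_vecMulVec (Y : M ι) (hY : Y.IsHermitian)
    (h : ∀ v : ι → ℂ, 0 ≤ ((Y * vecMulVec v (star v)).trace).re) : Y.PosSemidef := by
  refine Matrix.PosSemidef.of_dotProduct_mulVec_nonneg hY fun x => ?_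
  have h1 := h x
  rw [trace_mul_vecMulVec] at h1
  have h2 := dotProduct_self_star Y hY x
  rw [Complex.le_def]
  constructor
  · simpa using h1
  · have := congrArg Complex.im h2
    simp only [Complex.star_def, Complex.conj_im] at this
    simp only [Complex.zero_im]
    linarith

lemma trace_conjTranspose_mul_self_re (T : M ι) :
    (Tᴴ * T).trace.re = ∑ j, ∑ k, Complex.normSq (T k j) := by
  simp only [Matrix.trace, Matrix.diag, Matrix.mul_apply, conjTranspose_apply]
  rw [Complex.re_sum]
  refine Finset.sum_congr rfl fun j _ => ?_
  rw [Complex.re_sum]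
  refine Finset.sum_congr rfl fun k _ => ?_
  simp [Complex.normSq_apply, Complex.mul_re]

lemma trace_conjTranspose_mul_self_pos {T : M ι} (hT : T ≠ 0) :
    0 < (Tᴴ * T).trace.re := by
  rw [trace_conjTranspose_mul_self_re]
  have h1 : ∃ k j, T k j ≠ 0 := by
    by_contra h
    push_neg at h
    exact hT (by ext k j; simpa using h k j)
  obtain ⟨k, j, hkj⟩ := h1
  have : 0 < Complex.normSq (T k j) := Complex.normSq_pos.2 hkj
  have h2 : Complex.normSq (T k j) ≤ ∑ k', Complex.normSq (T k' j) :=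
    Finset.single_le_sum (f := fun k' => Complex.normSq (T k' j))
      (fun i _ => Complex.normSq_nonneg _) (Finset.mem_univ k)
  have h3 : (∑ k', Complex.normSq (T k' j)) ≤ ∑ j', ∑ k', Complex.normSq (T k' j') :=
    Finset.single_le_sum (f := fun j' => ∑ k', Complex.normSq (T k' j'))
      (fun i _ => Finset.sum_nonneg fun i' _ => Complex.normSq_nonneg _) (Finset.mem_univ j)
  linarith

/-- Quantitative positive-definiteness: `W ≽ c·1` for the least eigenvalue `c`. -/
lemma posdef_quant {W : M ι} (hW : W.PosDef) [Nonempty ι] :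
    ∃ c : ℝ, 0 < c ∧ ∀ x : ι → ℂ,
      c * ∑ i, Complex.normSq (x i) ≤ (star x ⬝ᵥ W *ᵥ x).re := by
  classical
  have hH := hW.isHermitian
  set lam := hH.eigenvalues with hlam
  set c := Finset.univ.inf' Finset.univ_nonempty lam with hc
  have hcpos : 0 < c := by
    rw [hc, Finset.lt_inf'_iff]
    exact fun i _ => hW.eigenvalues_pos i
  refine ⟨c, hcpos, fun x => ?_⟩
  set U : M ι := (hH.eigenvectorUnitary : M ι)
  have hU : U * Uᴴ = 1 := by
    have := (Matrix.mem_unitaryGroup_iff).mp hH.eigenvectorUnitary.2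
    simpa [Matrix.star_eq_conjTranspose] using this
  have hdg : (Matrix.diagonal (fun i => ((lam i : ℂ) - (c:ℂ)))).PosSemidef := by
    rw [Matrix.posSemidef_diagonal_iff]
    intro i
    have : c ≤ lam i := Finset.inf'_le _ (Finset.mem_univ i)
    have : (0:ℝ) ≤ lam i - c := by linarith
    simpa using Complex.zero_le_real.2 this
  have key : (W - (c:ℂ) • 1).PosSemidef := by
    have hspec : W = U * diagonal (RCLike.ofReal ∘ lam) * star U := hH.spectral_theorem
    have h1 : (c:ℂ) • (1 : M ι) = U * ((c:ℂ) • 1) * Uᴴ := by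
      rw [Matrix.mul_smul, mul_one, Matrix.smul_mul, hU]
    have h2 : W - (c:ℂ) • 1 =
        U * (Matrix.diagonal (fun i => ((lam i : ℂ) - (c:ℂ)))) * Uᴴ := by
      rw [show Matrix.diagonal (fun i => ((lam i : ℂ) - (c:ℂ)))
            = Matrix.diagonal ((RCLike.ofReal ∘ lam)) - (c:ℂ) • 1 by
          ext i j
          by_cases h : i = j <;> simp [Matrix.diagonal_apply, Matrix.one_apply, h]]
      rw [Matrix.mul_sub, Matrix.sub_mul]
      rw [← Matrix.star_eq_conjTranspose]
      rw [← hspec, Matrix.star_eq_conjTranspose, ← h1]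
    rw [h2]
    exact hdg.mul_mul_conjTranspose_same U
  have h3c := key.dotProduct_mulVec_nonneg x
  rw [Complex.le_def] at h3c
  have h3 : (0:ℝ) ≤ (star x ⬝ᵥ ((W - (c:ℂ) • 1) *ᵥ x)).re := by simpa using h3c.1
  have h4 : star x ⬝ᵥ ((W - (c:ℂ) • 1) *ᵥ x)
      = star x ⬝ᵥ W *ᵥ x - (c:ℂ) * (star x ⬝ᵥ x) := by
    rw [Matrix.sub_mulVec, dotProduct_sub, smul_mulVec, one_mulVec, dotProduct_smul,
      smul_eq_mul]
  have h5 : (star x ⬝ᵥ x) = ((∑ i, Complex.normSq (x i) : ℝ) : ℂ) := by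
    simp only [dotProduct, Pi.star_apply]
    push_cast
    refine Finset.sum_congr rfl fun i _ => ?_
    rw [Complex.star_def, ← Complex.normSq_eq_conj_mul_self]
  rw [h4, h5] at h3
  simp only [Complex.sub_re, Complex.mul_re, Complex.ofReal_re, Complex.ofReal_im] at h3
  nlinarith [h3]

/-- Positive definiteness is stable under small Hermitian perturbations. -/
lemma posdef_perturb {W : M ι} (hW : W.PosDef) :
    ∃ ε : ℝ, 0 < ε ∧ ∀ N : M ι, N.IsHermitian →
      (∀ j k, ‖N j k‖ < ε) → (W + N).PosDef := by
  classical
  cases isEmpty_or_nonempty ι with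
  | inl h =>
    refine ⟨1, one_pos, fun N hN _ => Matrix.PosDef.of_dotProduct_mulVec_pos (hW.isHermitian.add hN) fun x hx => ?_⟩
    exact absurd (funext fun i => (h.false i).elim) hx
  | inr h =>
    obtain ⟨c, hc, hquant⟩ := posdef_quant hW
    set card := (Fintype.card ι : ℝ)
    have hcard : 0 < card + 1 := by positivity
    refine ⟨c / (2 * (card + 1)), by positivity, fun N hN hNe => ?_⟩
    refine Matrix.PosDef.of_dotProduct_mulVec_pos (hW.isHermitian.add hN) fun x hx => ?_
    set z := star x ⬝ᵥ (W + N) *ᵥ x with hz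
    have hzr : star z = z := dotProduct_self_star _ (hW.isHermitian.add hN) x
    have him : z.im = 0 := by
      have := congrArg Complex.im hzr
      simp only [Complex.star_def, Complex.conj_im] at this
      linarith
    have hsplit : z = star x ⬝ᵥ W *ᵥ x + star x ⬝ᵥ N *ᵥ x := by
      rw [hz, Matrix.add_mulVec, dotProduct_add]
    -- bound on the N-term
    have hNbound : |(star x ⬝ᵥ N *ᵥ x).re| ≤
        (c / (2 * (card + 1))) * (card * ∑ i, Complex.normSq (x i)) := by
      have h1 : ‖star x ⬝ᵥ N *ᵥ x‖ ≤
          ∑ j, ∑ k, ‖N j k‖ * (‖x j‖ * ‖x k‖) := by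
        simp only [dotProduct, Matrix.mulVec, Pi.star_apply, Finset.mul_sum]
        calc ‖∑ j, ∑ k, star (x j) * (N j k * x k)‖
            ≤ ∑ j, ‖∑ k, star (x j) * (N j k * x k)‖ :=
              norm_sum_le _ _
          _ ≤ ∑ j, ∑ k, ‖star (x j) * (N j k * x k)‖ :=
              Finset.sum_le_sum fun j _ => norm_sum_le _ _
          _ = ∑ j, ∑ k, ‖N j k‖ * (‖x j‖ * ‖x k‖) := by
              refine Finset.sum_congr rfl fun j _ => Finset.sum_congr rfl fun k _ => ?_
              simp only [norm_mul, Complex.star_def, Complex.norm_conj]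
              ring
      have h2 : ∑ j, ∑ k, ‖N j k‖ * (‖x j‖ * ‖x k‖) ≤
          (c / (2 * (card + 1))) * ((∑ i, ‖x i‖) * (∑ i, ‖x i‖)) := by
        have hrhs : (∑ i, ‖x i‖) * (∑ i, ‖x i‖)
            = ∑ j, ∑ k, ‖x j‖ * ‖x k‖ :=
          Finset.sum_mul_sum _ _ _ _
        rw [hrhs, Finset.mul_sum]
        refine Finset.sum_le_sum fun j _ => ?_
        rw [Finset.mul_sum]
        refine Finset.sum_le_sum fun k _ => ?_
        exact mul_le_mul_of_nonneg_right (hNe j k).le (by positivity)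
      have h3 : (∑ i, ‖x i‖) * (∑ i, ‖x i‖) ≤
          card * ∑ i, Complex.normSq (x i) := by
        have := sq_sum_le_card_mul_sum_sq (s := Finset.univ) (f := fun i => ‖x i‖)
        simp only [sq] at this
        calc (∑ i, ‖x i‖) * (∑ i, ‖x i‖)
            ≤ (Finset.univ.card : ℝ) * ∑ i, ‖x i‖ * ‖x i‖ := this
          _ = card * ∑ i, Complex.normSq (x i) := by
              rw [Finset.card_univ]
              congr 1
              refine Finset.sum_congr rfl fun i _ => ?_
              rw [Complex.normSq_eq_norm_sq, sq]
      calc |(star x ⬝ᵥ N *ᵥ x).re| ≤ ‖star x ⬝ᵥ N *ᵥ x‖ := Complex.abs_re_le_norm _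
        _ ≤ ∑ j, ∑ k, ‖N j k‖ * (‖x j‖ * ‖x k‖) := h1
        _ ≤ (c / (2 * (card + 1))) * ((∑ i, ‖x i‖) * (∑ i, ‖x i‖)) := h2
        _ ≤ (c / (2 * (card + 1))) * (card * ∑ i, Complex.normSq (x i)) := by
            apply mul_le_mul_of_nonneg_left h3 (by positivity)
    have hsum_pos : 0 < ∑ i, Complex.normSq (x i) := by
      have hxne : ∃ i, x i ≠ 0 := by
        by_contra hcon
        push_neg at hcon
        exact hx (funext fun i => hcon i)
      obtain ⟨i, hi⟩ := hxne
      have h4 : 0 < Complex.normSq (x i) := Complex.normSq_pos.2 hi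
      have h5 : Complex.normSq (x i) ≤ ∑ i', Complex.normSq (x i') :=
        Finset.single_le_sum (fun i' _ => Complex.normSq_nonneg _) (Finset.mem_univ i)
      linarith
    have hre : 0 < z.re := by
      rw [hsplit]
      have hq := hquant x
      simp only [Complex.add_re]
      have hkey : (c / (2 * (card + 1))) * (card * ∑ i, Complex.normSq (x i)) <
          c * ∑ i, Complex.normSq (x i) := by
        rw [div_mul_eq_mul_div, div_lt_iff₀ (by positivity)]
        have hcard0 : (0:ℝ) ≤ card := Nat.cast_nonneg _
        nlinarith [mul_pos hc hsum_pos, mul_nonneg (mul_pos hc hsum_pos).le hcard0]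
      have := abs_le.mp hNbound
      linarith [this.1]
    rw [Complex.lt_def]
    exact ⟨by simpa using hre, by simp [him]⟩

/-- Any Hermitian matrix is dominated by a multiple of the identity. -/
lemma exists_smul_one_add_posDef (K : M ι) (hK : K.IsHermitian) :
    ∃ t : ℝ, 0 < t ∧ ((t : ℝ) • (1 : M ι) + K).PosDef := by
  classical
  obtain ⟨ε, hε, hper⟩ := posdef_perturb (Matrix.PosDef.one (n := ι) (R := ℂ))
  set S := (∑ j, ∑ k, ‖K j k‖) with hS
  have hS0 : 0 ≤ S := Finset.sum_nonneg fun j _ => Finset.sum_nonneg fun k _ => norm_nonneg _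
  set t := S / ε + 1 with ht
  have htpos : 0 < t := by positivity
  refine ⟨t, htpos, ?_⟩
  have hKt : (t⁻¹ • K).IsHermitian := by
    show _ = _
    rw [conjTranspose_smul, hK.eq]
    norm_num
  have hbound : ∀ j k, ‖(t⁻¹ • K) j k‖ < ε := by
    intro j k
    have h1 : ‖K j k‖ ≤ S := by
      have h2 : ‖K j k‖ ≤ ∑ k', ‖K j k'‖ :=
        Finset.single_le_sum (fun k' _ => norm_nonneg _) (Finset.mem_univ k)
      have h3 : (∑ k', ‖K j k'‖) ≤ S :=
        Finset.single_le_sum (f := fun j' => ∑ k', ‖K j' k'‖)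
          (fun j' _ => Finset.sum_nonneg fun k' _ => norm_nonneg _) (Finset.mem_univ j)
      linarith
    have heq : ‖(t⁻¹ • K) j k‖ = t⁻¹ * ‖K j k‖ := by
      rw [Matrix.smul_apply, Complex.real_smul, norm_mul, Complex.norm_of_nonneg (inv_pos.2 htpos).le]
    rw [heq, inv_mul_lt_iff₀ htpos]
    calc ‖K j k‖ ≤ S := h1
      _ < t * ε := by
        rw [ht, add_mul, one_mul, div_mul_cancel₀ _ (ne_of_gt hε)]
        linarith
  have hPD : ((1 : M ι) + t⁻¹ • K).PosDef := hper _ hKt hbound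
  have := pd_smul hPD htpos
  rwa [smul_add, smul_smul, mul_inv_cancel₀ (ne_of_gt htpos), one_smul] at this

lemma isHermitian_smul_real {H : M ι} (hH : H.IsHermitian) (r : ℝ) : (r • H).IsHermitian := by
  show _ = _
  rw [conjTranspose_smul, hH.eq]
  norm_num

lemma psd_sum {κ : Type*} (s : Finset κ) (f : κ → M ι)
    (h : ∀ i ∈ s, (f i).PosSemidef) : (∑ i ∈ s, f i).PosSemidef :=
  Finset.sum_induction f _ (fun _ _ ha hb => ha.add hb) Matrix.PosSemidef.zero h

lemma real_aux {a b C : ℝ} (h : ∀ δ : ℝ, 0 < δ → a < b + δ * C) : a ≤ b := by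
  by_cases hC : C ≤ 0
  · have := h 1 one_pos
    nlinarith
  · push_neg at hC
    by_contra hab
    push_neg at hab
    have hδ : 0 < (a - b) / (2 * C) := div_pos (by linarith) (by positivity)
    have h2 := h _ hδ
    have hc' : (a - b) / (2 * C) * C = (a - b) / 2 := by
      field_simp
    rw [hc'] at h2
    linarith

/-- Every real-linear functional on complex matrices is `A ↦ Re (tr (Y A))`. -/
lemma exists_repr (φ : Matrix ι ι ℂ →ₗ[ℝ] ℝ) :
    ∃ Y : M ι, ∀ A : M ι, ((Y * A).trace).re = φ A := by
  classical
  refine ⟨Matrix.of fun j k => ((φ (Matrix.single k j 1) : ℝ) : ℂ)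
    - Complex.I * ((φ (Complex.I • Matrix.single k j 1) : ℝ) : ℂ), fun A => ?_⟩
  set Y : M ι := Matrix.of fun j k => ((φ (Matrix.single k j 1) : ℝ) : ℂ)
    - Complex.I * ((φ (Complex.I • Matrix.single k j 1) : ℝ) : ℂ) with hY
  have hre : ∀ j k, (Y j k).re = φ (Matrix.single k j 1) := by
    intro j k; simp [hY]
  have him : ∀ j k, (Y j k).im = -φ (Complex.I • Matrix.single k j 1) := by
    intro j k; simp [hY]
  have htr : (Y * A).trace = ∑ j, ∑ k, Y j k * A k j := by
    simp [Matrix.trace, Matrix.diag, Matrix.mul_apply]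
  rw [htr, Complex.re_sum]
  have hterm : ∀ j, (∑ k, Y j k * A k j).re
      = ∑ k, φ (Matrix.single k j (A k j)) := by
    intro j
    rw [Complex.re_sum]
    refine Finset.sum_congr rfl fun k _ => ?_
    have hdec : Matrix.single k j (A k j)
        = (A k j).re • Matrix.single k j 1 + (A k j).im • (Complex.I • Matrix.single k j 1) := by
      ext a b
      simp only [Matrix.single, Matrix.of_apply, Matrix.add_apply, Matrix.smul_apply,
        Complex.real_smul, smul_eq_mul]
      split_ifs <;> simp [Complex.re_add_im]
    rw [hdec, map_add, LinearMap.map_smul, LinearMap.map_smul]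
    rw [Complex.mul_re, hre, him]
    simp only [smul_eq_mul]
    ring
  calc ∑ j, (∑ k, Y j k * A k j).re = ∑ j, ∑ k, φ (Matrix.single k j (A k j)) := by
        exact Finset.sum_congr rfl fun j _ => hterm j
    _ = φ A := by
        simp_rw [← map_sum]
        rw [show (∑ j, ∑ k, Matrix.single k j (A k j)) = A by
          rw [Finset.sum_comm]
          exact (matrix_eq_sum_single A).symm]

lemma trace_hermPart_mul_re (Y A : M ι) (hA : A.IsHermitian) :
    (((hermPart Y) * A).trace).re = ((Y * A).trace).re := by
  have h1 : hermPart Y * A = (2⁻¹ : ℂ) • (Y * A + Yᴴ * A) := by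
    rw [hermPart, Matrix.smul_mul, Matrix.add_mul]
  have h2 : (Yᴴ * A).trace = star ((Y * A).trace) := by
    calc (Yᴴ * A).trace = ((Aᴴ * Y)ᴴ).trace := by rw [conjTranspose_mul, conjTranspose_conjTranspose]
    _ = star ((Aᴴ * Y).trace) := trace_conjTranspose _
    _ = star ((Y * A).trace) := by rw [hA.eq, trace_mul_comm]
  rw [h1, trace_smul, trace_add, h2]
  set z := (Y * A).trace
  have : z + star z = ((2 * z.re : ℝ) : ℂ) := by
    rw [Complex.star_def, Complex.add_conj]
  rw [this]
  simp [Complex.real_smul]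

section Main
variable {D n : ℕ}

local notation "Mty" => Matrix (Fin D) (Fin D) ℂ
local notation "E" => (ℝ × (Fin n → Matrix (Fin D) (Fin D) ℂ))

lemma strong_duality_eps (X : Fin n → Matrix (Fin D) (Fin D) ℂ)
    (hX : ∀ i, (X i).PosSemidef) (hn : 0 < n) (p ε : ℝ) (hε : 0 < ε)
    (hlb : ∀ H : Mty, H.IsHermitian → (∀ i, (H - X i).PosSemidef) → p ≤ (H.trace).re) :
    ∃ Y : Fin n → Mty, (∀ i, (Y i).PosSemidef) ∧ (∑ i, Y i = 1) ∧
      p - ε ≤ ∑ i, ((X i * Y i).trace).re := by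
  classical
  set U : Set E :=
    {q | ∃ H : Mty, H.IsHermitian ∧ (H.trace).re < q.1 ∧
      ∀ i, (hermPart (q.2 i) - X i + H).PosDef} with hUdef
  -- convexity
  have hconv : Convex ℝ U := by
    rintro q ⟨Hq, hHq, htq, hpdq⟩ r ⟨Hr, hHr, htr', hpdr⟩ a b ha hb hab
    refine ⟨a • Hq + b • Hr,
      (isHermitian_smul_real hHq a).add (isHermitian_smul_real hHr b), ?_, ?_⟩
    · have h1 : ((a • Hq + b • Hr).trace).re = a * (Hq.trace).re + b * (Hr.trace).re := by
        rw [trace_add, trace_smul, trace_smul, Complex.add_re]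
        congr 1 <;> rw [Complex.real_smul, Complex.mul_re] <;> simp
      have h2 : (a • q + b • r).1 = a * q.1 + b * r.1 := rfl
      rw [h1, h2]
      rcases eq_or_lt_of_le ha with ha0 | ha0
      · have hb1 : b = 1 := by linarith
        rw [← ha0, hb1]
        simp only [zero_mul, one_mul, zero_add]
        exact htr'
      · have h3 := mul_lt_mul_of_pos_left htq ha0
        have h4 : b * (Hr.trace).re ≤ b * r.1 := mul_le_mul_of_nonneg_left htr'.le hb
        linarith
    · intro i
      have hsnd : (a • q + b • r).2 i = a • (q.2 i) + b • (r.2 i) := rfl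
      have key : hermPart ((a • q + b • r).2 i) - (a • X i + b • X i) + (a • Hq + b • Hr)
          = a • (hermPart (q.2 i) - X i + Hq) + b • (hermPart (r.2 i) - X i + Hr) := by
        rw [hsnd, hermPart_add, hermPart_smul, hermPart_smul]
        rw [smul_add, smul_add, smul_sub, smul_sub]
        abel
      have hXi : a • X i + b • X i = X i := by rw [← add_smul, hab, one_smul]
      rw [hXi] at key
      rw [key]
      rcases eq_or_lt_of_le ha with ha0 | ha0
      · have hb1 : b = 1 := by linarith
        rw [← ha0, hb1, zero_smul, one_smul, zero_add]
        exact hpdr i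
      · rcases eq_or_lt_of_le hb with hb0 | hb0
        · have ha1 : a = 1 := by linarith
          rw [← hb0, ha1, zero_smul, one_smul, add_zero]
          exact hpdq i
        · exact (pd_smul (hpdq i) ha0).add_posSemidef (psd_smul (hpdr i).posSemidef hb0.le)
  -- openness
  have hopen : IsOpen U := by
    rw [isOpen_iff_forall_mem_open]
    rintro q ⟨H, hH, htr', hpd⟩
    choose εf hεf hper using fun i => posdef_perturb (hpd i)
    have hcont : ∀ (i : Fin n) (j k : Fin D),
        Continuous fun w : E => hermPart (w.2 i) j k := by
      intro i j k
      have h1 : ∀ (j' k' : Fin D), Continuous fun w : E => w.2 i j' k' := fun j' k' =>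
        (continuous_apply k').comp (((continuous_apply j').comp
          ((continuous_apply i).comp continuous_snd)))
      have h2 : (fun w : E => hermPart (w.2 i) j k)
          = fun w : E => (2⁻¹ : ℂ) * (w.2 i j k + star (w.2 i k j)) := by
        funext w
        simp [hermPart, conjTranspose_apply, Matrix.smul_apply, Matrix.add_apply, smul_eq_mul]
      rw [h2]
      exact continuous_const.mul ((h1 j k).add (continuous_star.comp (h1 k j)))
    refine ⟨{w : E | (H.trace).re < w.1} ∩ ⋂ i, ⋂ j, ⋂ k,
      {w : E | ‖hermPart (w.2 i) j k - hermPart (q.2 i) j k‖ < εf i}, ?_, ?_, ?_⟩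
    · rintro w ⟨hw1, hw2⟩
      simp only [Set.mem_iInter, Set.mem_setOf_eq] at hw2
      refine ⟨H, hH, hw1, fun i => ?_⟩
      have heq : hermPart (w.2 i) - X i + H
          = (hermPart (q.2 i) - X i + H) + (hermPart (w.2 i) - hermPart (q.2 i)) := by abel
      rw [heq]
      refine hper i _ ((hermPart_isHermitian _).sub (hermPart_isHermitian _)) fun j k => ?_
      simpa [Matrix.sub_apply] using hw2 i j k
    · refine IsOpen.inter (isOpen_lt continuous_const continuous_fst) ?_
      refine isOpen_iInter_of_finite fun i => isOpen_iInter_of_finite fun j =>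
        isOpen_iInter_of_finite fun k => ?_
      exact isOpen_lt (continuous_norm.comp ((hcont i j k).sub continuous_const))
        continuous_const
    · constructor
      · exact htr'
      · simp only [Set.mem_iInter, Set.mem_setOf_eq]
        intro i j k
        simpa using hεf i
  -- the point to separate
  have hx₀ : ((p - ε, 0) : E) ∉ U := by
    rintro ⟨H, hH, htr', hpd⟩
    have hfeas : ∀ i, (H - X i).PosSemidef := by
      intro i
      have := hpd i
      have h0 : hermPart ((0 : Fin n → Mty) i) = 0 := by
        show hermPart (0 : Mty) = 0
        rw [hermPart_of_isHermitian isHermitian_zero]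
      rw [h0] at this
      have heq : (0 : Mty) - X i + H = H - X i := by abel
      rw [heq] at this
      exact this.posSemidef
    have := hlb H hH hfeas
    simp only at htr'
    linarith
  obtain ⟨f, hsep⟩ := geometric_hahn_banach_point_open hconv hopen hx₀
  -- decomposition of the functional
  set γ : ℝ := f (1, 0) with hγdef
  set φL : Fin n → (Mty →ₗ[ℝ] ℝ) := fun i =>
    (f.toLinearMap).comp ((LinearMap.inr ℝ ℝ (Fin n → Mty)).comp
      (LinearMap.single ℝ (fun _ => Mty) i)) with hφLdef
  have hφL : ∀ i (Z : Mty), φL i Z = f (0, Pi.single i Z) := fun i Z => rfl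
  have hdecomp : ∀ (r : ℝ) (Z : Fin n → Mty), f (r, Z) = r * γ + ∑ i, φL i (Z i) := by
    intro r Z
    have hzd : ((r, Z) : E) = r • ((1:ℝ), (0 : Fin n → Mty))
        + ∑ i, ((0:ℝ), Pi.single i (Z i)) := by
      refine Prod.ext ?_ ?_
      · simp [Prod.fst_sum]
      · simp only [Prod.snd_add, Prod.snd_sum, Prod.smul_snd, smul_zero, zero_add]
        exact (Finset.univ_sum_single Z).symm
    rw [hzd, map_add, f.map_smul, map_sum]
    simp only [smul_eq_mul, hγdef]
    exact congrArg _ (Finset.sum_congr rfl fun i _ => (hφL i (Z i)).symm)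
  have hfx₀ : f ((p - ε, 0) : E) = (p - ε) * γ := by
    rw [hdecomp]
    simp only [Pi.zero_apply, map_zero, Finset.sum_const_zero, add_zero]
  -- membership-based inequality
  have hmem : ∀ (H : Mty), H.IsHermitian → ∀ (Z : Fin n → Mty) (r : ℝ), (H.trace).re < r →
      (∀ i, (hermPart (Z i) - X i + H).PosDef) →
      (p - ε) * γ < r * γ + ∑ i, φL i (Z i) := by
    intro H hH Z r hr hpd
    have := hsep (r, Z) ⟨H, hH, hr, hpd⟩
    rw [hfx₀, hdecomp] at this
    exact this
  -- Slater point
  set H₀ : Mty := (∑ i, X i) + 1 with hH₀def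
  have hH₀ : H₀.IsHermitian := by
    refine IsHermitian.add ?_ isHermitian_one
    show _ = _
    rw [conjTranspose_sum]
    exact Finset.sum_congr rfl fun i _ => (hX i).1
  have hH₀pd : ∀ i, (H₀ - X i).PosDef := by
    intro i
    have h1 : ∑ j ∈ Finset.univ.erase i, X j = (∑ j, X j) - X i :=
      Finset.sum_erase_eq_sub (Finset.mem_univ i)
    have h2 : (∑ j ∈ Finset.univ.erase i, X j).PosSemidef := psd_sum _ _ (fun j _ => hX j)
    have h3 : H₀ - X i = 1 + ∑ j ∈ Finset.univ.erase i, X j := by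
      rw [hH₀def, h1]; abel
    rw [h3]
    exact (Matrix.PosDef.one).add_posSemidef h2
  set c : ℝ := (H₀.trace).re + 1 with hcdef
  have hmemc : ∀ r : ℝ, (H₀.trace).re < r → (p - ε) * γ < r * γ := by
    intro r hr
    have := hmem H₀ hH₀ 0 r hr (fun i => by
      have h0 : hermPart ((0 : Fin n → Mty) i) = 0 := by
        show hermPart (0 : Mty) = 0
        rw [hermPart_of_isHermitian isHermitian_zero]
      rw [h0, show (0 : Mty) - X i + H₀ = H₀ - X i by abel]
      exact hH₀pd i)
    simpa using this
  -- positivity of γ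
  have hγpos : 0 < γ := by
    rcases lt_trichotomy γ 0 with hneg | hzero | hpos
    · exfalso
      have h1 := hmemc (c + (|p - ε - c| + 1)) (by
        have := abs_nonneg (p - ε - c); rw [hcdef]; linarith)
      have h2 : c + (|p - ε - c| + 1) ≥ (p - ε) + 1 := by
        have := le_abs_self (p - ε - c); linarith
      have h3 : (c + (|p - ε - c| + 1)) * γ ≤ ((p - ε) + 1) * γ :=
        mul_le_mul_of_nonpos_right h2 hneg.le
      nlinarith
    · exfalso
      have h1 := hmemc c (by rw [hcdef]; linarith)
      rw [hzero] at h1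
      simp at h1
    · exact hpos
  have hcγ : (p - ε) * γ < c * γ := hmemc c (by rw [hcdef]; linarith)
  -- positivity of the functionals on the PSD cone
  have hφpos : ∀ i (P : Mty), P.PosSemidef → 0 ≤ φL i P := by
    intro i P hP
    by_contra hneg
    push_neg at hneg
    set t : ℝ := (c * γ - (p - ε) * γ + 1) / (-(φL i P)) with htdef
    have ht : 0 < t := div_pos (by linarith) (by linarith)
    have hZpd : ∀ j, (hermPart ((Pi.single i (t • P) : Fin n → Mty) j) - X j + H₀).PosDef := by
      intro j
      by_cases hji : j = i
      · subst hji
        rw [Pi.single_eq_same, hermPart_of_isHermitian (isHermitian_smul_real hP.1 t)]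
        rw [show t • P - X j + H₀ = (H₀ - X j) + t • P by abel]
        exact (hH₀pd j).add_posSemidef (psd_smul hP ht.le)
      · rw [Pi.single_eq_of_ne hji]
        rw [hermPart_of_isHermitian isHermitian_zero,
          show (0 : Mty) - X j + H₀ = H₀ - X j by abel]
        exact hH₀pd j
    have h1 := hmem H₀ hH₀ (Pi.single i (t • P)) c (by rw [hcdef]; linarith) hZpd
    have h2 : ∑ j, φL j ((Pi.single i (t • P) : Fin n → Mty) j) = t * φL i P := by
      rw [Finset.sum_eq_single i]
      · rw [Pi.single_eq_same, LinearMap.map_smul, smul_eq_mul]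
      · intro j _ hji
        rw [Pi.single_eq_of_ne hji, map_zero]
      · intro h; exact absurd (Finset.mem_univ i) h
    rw [h2] at h1
    have hφne : φL i P ≠ 0 := ne_of_lt hneg
    have h3 : t * φL i P = -(c * γ - (p - ε) * γ + 1) := by
      calc t * φL i P = (c * γ - (p - ε) * γ + 1) * (φL i P / -(φL i P)) := by
            rw [htdef]; ring
      _ = -(c * γ - (p - ε) * γ + 1) := by
            rw [div_neg, div_self hφne]; ring
    rw [h3] at h1
    linarith
  -- key inequality for all Hermitian H
  have hkey : ∀ Hh : Mty, Hh.IsHermitian →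
      (p - ε) * γ ≤ (Hh.trace).re * γ + ∑ i, (φL i (X i) - φL i Hh) := by
    intro Hh hHh
    apply real_aux (C := γ + ∑ i, φL i (1 : Mty))
    intro δ hδ
    have h1 := hmem Hh hHh (fun _ => X _ - Hh + δ • 1) ((Hh.trace).re + δ) (by linarith)
      (fun i => by
        have hZH : (X i - Hh + δ • (1:Mty)).IsHermitian :=
          (((hX i).1).sub hHh).add (isHermitian_smul_real isHermitian_one δ)
        rw [hermPart_of_isHermitian hZH,
          show X i - Hh + δ • (1:Mty) - X i + Hh = δ • (1:Mty) by abel]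
        exact pd_smul Matrix.PosDef.one hδ)
    have h2 : ∀ i : Fin n, φL i (X i - Hh + δ • (1:Mty))
        = (φL i (X i) - φL i Hh) + δ * φL i (1:Mty) := by
      intro i
      rw [map_add, map_sub, LinearMap.map_smul, smul_eq_mul]
    rw [Finset.sum_congr rfl (fun i _ => h2 i), Finset.sum_add_distrib, ← Finset.mul_sum] at h1
    have e1 : ((Hh.trace).re + δ) * γ = (Hh.trace).re * γ + δ * γ := by ring
    have e2 : δ * (γ + ∑ i, φL i (1:Mty)) = δ * γ + δ * ∑ i, φL i (1:Mty) := by ring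
    rw [e1] at h1
    rw [e2]
    linarith
  -- representing matrices
  choose Yr hYr using fun i => exists_repr (φL i)
  set Y' : Fin n → Mty := fun i => hermPart (Yr i) with hY'def
  have hY'herm : ∀ i, (Y' i).IsHermitian := fun i => hermPart_isHermitian _
  have hY'repr : ∀ i (A : Mty), A.IsHermitian → ((Y' i * A).trace).re = φL i A := by
    intro i A hA
    rw [hY'def]
    rw [trace_hermPart_mul_re _ _ hA, hYr i A]
  have hY'psd : ∀ i, (Y' i).PosSemidef := by
    intro i
    refine posSemidef_of_re_vecMulVec _ (hY'herm i) fun v => ?_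
    rw [hY'repr i _ (vecMulVec_posSemidef v).1]
    exact hφpos i _ (vecMulVec_posSemidef v)
  -- the sum condition
  set T : Mty := γ • (1 : Mty) - ∑ i, Y' i with hTdef
  have hTherm : T.IsHermitian := by
    refine IsHermitian.sub (isHermitian_smul_real isHermitian_one γ) ?_
    show _ = _
    rw [conjTranspose_sum]
    exact Finset.sum_congr rfl fun i _ => (hY'herm i).eq
  set a0 : ℝ := (p - ε) * γ - ∑ i, φL i (X i) with ha0def
  have hTineq : ∀ Hh : Mty, Hh.IsHermitian → a0 ≤ ((T * Hh).trace).re := by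
    intro Hh hHh
    have h1 := hkey Hh hHh
    have h2 : ∑ i, (φL i (X i) - φL i Hh) = ∑ i, φL i (X i) - ∑ i, φL i Hh :=
      Finset.sum_sub_distrib _ _
    have h3 : ∑ i, φL i Hh = (((∑ i, Y' i) * Hh).trace).re := by
      rw [Finset.sum_mul, trace_sum, Complex.re_sum]
      exact Finset.sum_congr rfl fun i _ => (hY'repr i Hh hHh).symm
    have h4 : (Hh.trace).re * γ = (((γ • (1:Mty)) * Hh).trace).re := by
      rw [Matrix.smul_mul, one_mul, trace_smul]
      rw [Complex.real_smul, Complex.mul_re]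
      simp [mul_comm]
    have h5 : ((T * Hh).trace).re
        = (((γ • (1:Mty)) * Hh).trace).re - (((∑ i, Y' i) * Hh).trace).re := by
      rw [hTdef, Matrix.sub_mul, trace_sub, Complex.sub_re]
    rw [h5, ← h4, ← h3]
    rw [h2] at h1
    rw [ha0def]
    linarith
  have hT0 : T = 0 := by
    by_contra hT0
    have hm : 0 < ((Tᴴ * T).trace).re := trace_conjTranspose_mul_self_pos hT0
    set t : ℝ := (|a0| + 1) / ((Tᴴ * T).trace).re with htdef
    have ht : 0 < t := div_pos (by positivity) hm
    have h1 := hTineq (-(t • T)) (by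
      have := isHermitian_smul_real hTherm t
      exact this.neg)
    have h2 : ((T * -(t • T)).trace).re = -(t * ((Tᴴ * T).trace).re) := by
      rw [Matrix.mul_neg, trace_neg, Matrix.mul_smul, trace_smul]
      rw [Complex.neg_re, Complex.real_smul, Complex.mul_re]
      simp only [Complex.ofReal_re, Complex.ofReal_im, zero_mul, sub_zero]
      rw [hTherm.eq]
    rw [h2] at h1
    have h3 : t * ((Tᴴ * T).trace).re = |a0| + 1 := by
      rw [htdef]
      field_simp
    rw [h3] at h1
    have := neg_abs_le a0
    linarith
  -- conclusion
  refine ⟨fun i => γ⁻¹ • Y' i, fun i => psd_smul (hY'psd i) (inv_nonneg.2 hγpos.le), ?_, ?_⟩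
  · have hsum : ∑ i, Y' i = γ • (1 : Mty) := by
      have := sub_eq_zero.mp hT0
      exact this.symm
    rw [← Finset.smul_sum, hsum, smul_smul, inv_mul_cancel₀ (ne_of_gt hγpos), one_smul]
  · have h0 := hkey 0 isHermitian_zero
    simp only [trace_zero, Complex.zero_re, zero_mul, map_zero, sub_zero, zero_add] at h0
    have hval : ∀ i, ((X i * (γ⁻¹ • Y' i)).trace).re = γ⁻¹ * φL i (X i) := by
      intro i
      rw [mul_smul_comm, trace_smul, Complex.real_smul, Complex.mul_re]
      simp only [Complex.ofReal_re, Complex.ofReal_im, zero_mul, sub_zero]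
      rw [trace_mul_comm, hY'repr i _ (hX i).1]
    rw [Finset.sum_congr rfl (fun i _ => hval i), ← Finset.mul_sum]
    have := mul_le_mul_of_nonneg_left h0 (inv_nonneg.2 hγpos.le)
    calc p - ε = γ⁻¹ * ((p - ε) * γ) := by
          field_simp
      _ ≤ γ⁻¹ * ∑ i, φL i (X i) := this

lemma weak_duality (X : Fin n → Mty) (Y : Fin n → Mty)
    (hY1 : ∀ i, (Y i).PosSemidef) (hY2 : ∑ i, Y i = 1) (H : Mty) (hH : H.IsHermitian)
    (hfeas : ∀ i, (H - X i).PosSemidef) :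
    ∑ i, ((X i * Y i).trace).re ≤ (H.trace).re := by
  have c1 : H.trace = ∑ i, (X i * Y i).trace + ∑ i, ((H - X i) * Y i).trace := by
    calc H.trace = (H * 1).trace := by rw [mul_one]
    _ = (H * ∑ i, Y i).trace := by rw [hY2]
    _ = (∑ i, H * Y i).trace := by rw [Finset.mul_sum]
    _ = ∑ i, (H * Y i).trace := trace_sum _ _
    _ = ∑ i, ((X i * Y i).trace + ((H - X i) * Y i).trace) := by
        refine Finset.sum_congr rfl fun i _ => ?_
        rw [← trace_add, ← Matrix.add_mul]
        congr 2
        abel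
    _ = ∑ i, (X i * Y i).trace + ∑ i, ((H - X i) * Y i).trace := Finset.sum_add_distrib
  have c2 : ∀ i : Fin n, 0 ≤ (((H - X i) * Y i).trace).re := by
    intro i
    have := trace_mul_psd_nonneg (hfeas i) (hY1 i)
    rw [Complex.le_def] at this
    simpa using this.1
  have c3 := congrArg Complex.re c1
  rw [Complex.add_re, Complex.re_sum, Complex.re_sum] at c3
  have c4 := Finset.sum_nonneg (fun i (_ : i ∈ Finset.univ) => c2 i)
  linarith

end Main
end SDPaux

/-- Semidefinite-programming duality for the height function. -/
theorem stmt16 {D n : ℕ} (X : Fin n → Matrix (Fin D) (Fin D) ℂ)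
    (hX : ∀ i, (X i).PosSemidef) :
    height X = sSup { t : ℝ | ∃ Y : Fin n → Matrix (Fin D) (Fin D) ℂ,
      IsMeasurement Y ∧ t = ∑ i, (Matrix.trace (X i * Y i)).re } := by
  classical
  unfold height
  set P : Set ℝ := { t : ℝ | ∃ H : Matrix (Fin D) (Fin D) ℂ, H.IsHermitian ∧
    (∀ i, (H - X i).PosSemidef) ∧ t = (Matrix.trace H).re } with hPdef
  set Dl : Set ℝ := { t : ℝ | ∃ Y : Fin n → Matrix (Fin D) (Fin D) ℂ,
      IsMeasurement Y ∧ t = ∑ i, (Matrix.trace (X i * Y i)).re } with hDldef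
  rcases Nat.eq_zero_or_pos n with hn | hn
  · subst hn
    rcases Nat.eq_zero_or_pos D with hD | hD
    · subst hD
      have hP : P = {0} := by
        ext t
        simp only [hPdef, Set.mem_setOf_eq, Set.mem_singleton_iff]
        constructor
        · rintro ⟨H, _, _, rfl⟩
          simp [Matrix.trace]
        · rintro rfl
          exact ⟨0, Matrix.isHermitian_zero, fun i => i.elim0, by simp [Matrix.trace]⟩
      have hDl : Dl = {0} := by
        ext t
        simp only [hDldef, Set.mem_setOf_eq, Set.mem_singleton_iff]
        constructor
        · rintro ⟨Y, _, rfl⟩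
          simp
        · rintro rfl
          refine ⟨fun i => i.elim0, ⟨fun i => i.elim0, ?_⟩, by simp⟩
          ext i j
          exact i.elim0
      rw [hP, hDl, csInf_singleton, csSup_singleton]
    · -- n = 0, D > 0
      have hDl : Dl = ∅ := by
        ext t
        simp only [hDldef, Set.mem_setOf_eq, Set.mem_empty_iff_false, iff_false]
        rintro ⟨Y, ⟨_, hsum⟩, _⟩
        have h0 : (0 : Matrix (Fin D) (Fin D) ℂ) = 1 := by
          rw [← hsum]
          simp
        have := congrFun (congrFun h0 ⟨0, hD⟩) ⟨0, hD⟩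
        simp [Matrix.one_apply] at this
      have hnb : ¬ BddBelow P := by
        rintro ⟨b, hb⟩
        have hmem : b - 1 ∈ P := by
          refine ⟨((b - 1)/(D:ℝ)) • 1, SDPaux.isHermitian_smul_real Matrix.isHermitian_one _,
            fun i => i.elim0, ?_⟩
          rw [Matrix.trace_smul, Matrix.trace_one]
          rw [Complex.real_smul, Complex.mul_re]
          simp only [Complex.ofReal_re, Complex.ofReal_im, Complex.natCast_re, zero_mul,
            Complex.natCast_im, mul_zero, sub_zero, Fintype.card_fin]
          rw [div_mul_cancel₀ _ (by exact_mod_cast hD.ne' : (D:ℝ) ≠ 0)]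
        have := hb hmem
        linarith
      rw [hDl, Real.sSup_empty, Real.sInf_of_not_bddBelow hnb]
  · -- main case n > 0
    set i0 : Fin n := ⟨0, hn⟩
    -- primal feasible point
    have hHsum_herm : (∑ i, X i).IsHermitian := by
      show _ = _
      rw [Matrix.conjTranspose_sum]
      exact Finset.sum_congr rfl fun i _ => (hX i).1
    have hHsum_feas : ∀ i, ((∑ j, X j) - X i).PosSemidef := by
      intro i
      rw [← Finset.sum_erase_eq_sub (Finset.mem_univ i)]
      exact SDPaux.psd_sum _ _ (fun j _ => hX j)
    have hPne : P.Nonempty := ⟨(Matrix.trace (∑ i, X i)).re, ∑ i, X i, hHsum_herm,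
      hHsum_feas, rfl⟩
    -- dual feasible point
    have hY₀ : IsMeasurement (Pi.single i0 (1 : Matrix (Fin D) (Fin D) ℂ)) := by
      constructor
      · intro i
        by_cases hi : i = i0
        · subst hi
          rw [Pi.single_eq_same]
          exact Matrix.PosSemidef.one
        · rw [Pi.single_eq_of_ne hi]
          exact Matrix.PosSemidef.zero
      · rw [Finset.sum_pi_single']
        simp
    have hDlne : Dl.Nonempty := by
      exact ⟨_, Pi.single i0 (1 : Matrix (Fin D) (Fin D) ℂ), hY₀, rfl⟩
    -- weak duality
    have hweak : ∀ t ∈ Dl, ∀ s ∈ P, t ≤ s := by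
      rintro t ⟨Y, ⟨hY1, hY2⟩, rfl⟩ s ⟨H, hH, hfeas, rfl⟩
      exact SDPaux.weak_duality X Y hY1 hY2 H hH hfeas
    have hbddB : BddBelow P := by
      refine ⟨0, fun s hs => ?_⟩
      obtain ⟨H, hH, hfeas, rfl⟩ := hs
      have h1 : H = (H - X i0) + X i0 := by abel
      have h2 := SDPaux.trace_psd_nonneg (hfeas i0)
      have h3 := SDPaux.trace_psd_nonneg (hX i0)
      rw [Complex.le_def] at h2 h3
      rw [h1, Matrix.trace_add, Complex.add_re]
      simp only [Complex.zero_re] at h2 h3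
      linarith [h2.1, h3.1]
    have hbddA : BddAbove Dl := by
      obtain ⟨s₀, hs₀⟩ := hPne
      exact ⟨s₀, fun t ht => hweak t ht s₀ hs₀⟩
    refine le_antisymm ?_ ?_
    · -- sInf P ≤ sSup Dl
      apply le_of_forall_pos_le_add
      intro ε hε
      obtain ⟨Y, h1, h2, h3⟩ := SDPaux.strong_duality_eps X hX hn (sInf P) ε hε
        (fun H hH hfeas => csInf_le hbddB ⟨H, hH, hfeas, rfl⟩)
      have hmem : (∑ i, (Matrix.trace (X i * Y i)).re) ∈ Dl := ⟨Y, ⟨h1, h2⟩, rfl⟩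
      have := le_csSup hbddA hmem
      linarith
    · exact csSup_le hDlne (fun t ht => le_csInf hPne (fun s hs => hweak t ht s hs))
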